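/- Let c ∈ ℂ be an algebraic number with [ℚ(c) : ℚ] ≤ 2, and suppose the map f_c(z) = z² + c is postcritically finite, i.e., 0 is preperiodic for f_c. Then c ∈ {0, −1, −2, i, −i}. -/

import Mathlib

open IntermediateField Polynomial


open Polynomial

private lemma pcf_orbit_bound (c : ℂ) (m n : ℕ) (hmn : m < n)
    (h : (fun z : ℂ => z ^ 2 + c)^[m] 0 = (fun z : ℂ => z ^ 2 + c)^[n] 0) :
    ∀ k, norm ((fun z : ℂ => z ^ 2 + c)^[k] 0) ≤ 2 := by
  set g : ℂ → ℂ := fun z : ℂ => z ^ 2 + c with hg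
  -- periodicity beyond m
  obtain ⟨p, hp, hnp⟩ : ∃ p, 0 < p ∧ n = m + p := ⟨n - m, by omega, by omega⟩
  have per : ∀ j, g^[m + j] 0 = g^[m + p + j] 0 := by
    intro j
    have t1 : g^[m + j] 0 = g^[j] (g^[m] 0) := by
      rw [Nat.add_comm, Function.iterate_add_apply]
    have t2 : g^[m + p + j] 0 = g^[j] (g^[n] 0) := by
      rw [← hnp, Nat.add_comm, Function.iterate_add_apply]
    rw [t1, t2, h]
  have perstep : ∀ i, m ≤ i → g^[i + p] 0 = g^[i] 0 := by
    intro i hi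
    obtain ⟨j, rfl⟩ := Nat.exists_eq_add_of_le hi
    have := per j
    rw [show m + j + p = m + p + j by ring]
    exact this.symm
  have pertot : ∀ t, g^[(m + (0:ℕ)) + t * p] 0 = g^[m] 0 := by
    intro t
    induction t with
    | zero => simp
    | succ t ih =>
      rw [show m + 0 + (t+1) * p = (m + 0 + t * p) + p by ring, perstep _ (by omega), ih]
  -- key escape lemma
  have key : ∀ k0 : ℕ, 2 < norm (g^[k0] 0) →
      norm c ≤ norm (g^[k0] 0) → False := by
    intro k0 h1 h2
    set r := norm (g^[k0] 0) with hr
    have hδ : 0 < r * (r - 2) := by nlinarith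
    have mono : ∀ j : ℕ, r + j * (r * (r - 2)) ≤ norm (g^[k0 + j] 0) := by
      intro j
      induction j with
      | zero => simp [hr]
      | succ j ih =>
        have hstep : g^[k0 + (j+1)] 0 = (g^[k0 + j] 0) ^ 2 + c := by
          rw [show k0 + (j+1) = (k0 + j) + 1 by ring, Function.iterate_succ_apply']
        set x := g^[k0 + j] 0 with hx
        have habs : norm x ^ 2 ≤ norm (x ^ 2 + c) + norm c := by
          calc norm x ^ 2 = norm (x ^ 2) := (norm_pow _ _).symm
            _ = norm (x ^ 2 + c + -c) := by rw [add_neg_cancel_right]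
            _ ≤ norm (x ^ 2 + c) + norm (-c) := norm_add_le _ _
            _ = norm (x ^ 2 + c) + norm c := by rw [norm_neg]
        rw [hstep]
        have hjc : (0:ℝ) ≤ (j:ℝ) := Nat.cast_nonneg j
        push_cast
        nlinarith [ih, h2, h1, mul_nonneg hjc hδ.le]
    -- contradiction with periodicity
    have hbig : ∀ t : ℕ, r + t * (r * (r - 2)) ≤ norm (g^[m + k0] 0) := by
      intro t
      have e1 : g^[m + k0 + t * p] 0 = g^[m + k0] 0 := by
        induction t with
        | zero => simp
        | succ t ih =>
          rw [show m + k0 + (t+1) * p = (m + k0 + t * p) + p by ring,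
            perstep _ (by omega), ih]
      have e2 := mono (m + t * p)
      rw [show k0 + (m + t * p) = m + k0 + t * p by ring, e1] at e2
      refine le_trans ?_ e2
      have : (t:ℝ) ≤ ((m + t * p : ℕ) : ℝ) := by
        have : t ≤ m + t * p := by nlinarith
        exact_mod_cast this
      nlinarith
    obtain ⟨t, ht⟩ := exists_nat_gt ((norm (g^[m + k0] 0) - r) / (r * (r - 2)))
    have := hbig t
    rw [div_lt_iff₀ hδ] at ht
    linarith
  -- first: |c| ≤ 2
  have hc2 : norm c ≤ 2 := by
    by_contra hlt
    push_neg at hlt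
    have e1 : g^[1] 0 = c := by simp [hg]
    exact key 1 (by rw [e1]; exact hlt) (by rw [e1])
  intro k
  by_contra hlt
  push_neg at hlt
  exact key k hlt (le_trans hc2 hlt.le)

private noncomputable def pcfP : ℕ → Polynomial ℤ
  | 0 => 0
  | (k+1) => pcfP k ^ 2 + X

private lemma pcfP_aeval (z : ℂ) : ∀ k, aeval z (pcfP k) = (fun w : ℂ => w ^ 2 + z)^[k] 0 := by
  intro k
  induction k with
  | zero => simp [pcfP]
  | succ k ih =>
    rw [Function.iterate_succ_apply']
    simp only [pcfP, map_add, map_pow, aeval_X, ih]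

private lemma pcfP_deg : ∀ k, (pcfP (k+1)).Monic ∧ (pcfP (k+1)).natDegree = 2 ^ k := by
  intro k
  induction k with
  | zero => constructor <;> simp [pcfP, monic_X]
  | succ k ih =>
    obtain ⟨hm, hd⟩ := ih
    have hm2 : (pcfP (k+1) ^ 2).Monic := hm.pow 2
    have hd2 : (pcfP (k+1) ^ 2).natDegree = 2 ^ (k+1) := by
      rw [hm.natDegree_pow, hd]; ring
    have hlt : (X : Polynomial ℤ).degree < (pcfP (k+1) ^ 2).degree := by
      rw [degree_X, degree_eq_natDegree hm2.ne_zero, hd2]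
      exact_mod_cast Nat.one_lt_two_pow_iff.mpr (Nat.succ_ne_zero k)
    constructor
    · show (pcfP (k+1) ^ 2 + X).Monic
      exact hm2.add_of_left hlt
    · show (pcfP (k+1) ^ 2 + X).natDegree = 2 ^ (k+1)
      rw [natDegree_add_eq_left_of_degree_lt hlt, hd2]

private lemma pcf_isIntegral (c : ℂ) (m n : ℕ) (hmn : m < n)
    (h : (fun z : ℂ => z ^ 2 + c)^[m] 0 = (fun z : ℂ => z ^ 2 + c)^[n] 0) :
    IsIntegral ℤ c := by
  obtain ⟨n', rfl⟩ : ∃ n', n = n' + 1 := ⟨n - 1, by omega⟩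
  obtain ⟨hm, hd⟩ := pcfP_deg n'
  have hlt : (pcfP m).degree < (pcfP (n'+1)).degree := by
    rcases Nat.eq_zero_or_pos m with rfl | hm0
    · rw [show pcfP 0 = 0 from rfl, degree_zero]
      exact bot_lt_iff_ne_bot.mpr (degree_eq_bot.not.mpr hm.ne_zero)
    · obtain ⟨m', rfl⟩ : ∃ m', m = m' + 1 := ⟨m - 1, by omega⟩
      obtain ⟨hm', hd'⟩ := pcfP_deg m'
      rw [degree_eq_natDegree hm.ne_zero, degree_eq_natDegree hm'.ne_zero, hd, hd']
      exact_mod_cast Nat.pow_lt_pow_right one_lt_two (by omega)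
  refine ⟨pcfP (n'+1) - pcfP m, hm.sub_of_left hlt, ?_⟩
  have : aeval c (pcfP (n'+1) - pcfP m) = 0 := by
    rw [map_sub, pcfP_aeval, pcfP_aeval, h, sub_self]
  simpa [aeval_def] using this

private lemma pcf_int_cases (a b : ℤ) (h1 : |a| ≤ 4) (h2 : |b| ≤ 4)
    (h3 : |b^2 - b - 2*a| ≤ 4) (h4 : |a*(a-b+1)| ≤ 4)
    (h5 : |(-b)*(1 - b*(1-b)^2 - 2*a*(1-b)) + 2*(a^2 - a*(1-b)^2)| ≤ 4)
    (h6 : |a*(1 - b*(1-b)^2 - 2*a*(1-b))^2 - b*(1 - b*(1-b)^2 - 2*a*(1-b))*(a^2 - a*(1-b)^2)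
      + (a^2 - a*(1-b)^2)^2| ≤ 4) :
    (a = -1 ∧ b = 1) ∨ (a = 0 ∧ b = 0) ∨ (a = 0 ∧ b = 1) ∨ (a = 0 ∧ b = 2) ∨
    (a = 1 ∧ b = 0) ∨ (a = 1 ∧ b = 1) ∨ (a = 1 ∧ b = 2) ∨ (a = 2 ∧ b = 3) ∨
    (a = 4 ∧ b = 4) := by
  obtain ⟨ha1, ha2⟩ := abs_le.mp h1
  obtain ⟨hb1, hb2⟩ := abs_le.mp h2
  rw [abs_le] at h3 h4 h5 h6
  interval_cases a <;> interval_cases b <;> omega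

/-- If `c` is an algebraic number of degree at most 2 over `ℚ` and the quadratic map
`f_c(z) = z² + c` is postcritically finite (i.e. `0` is preperiodic for `f_c`), then
`c ∈ {0, -1, -2, i, -i}`. -/
theorem pcf_quadratic_classification (c : ℂ) (halg : IsAlgebraic ℚ c)
    (hdeg : Module.finrank ℚ ℚ⟮c⟯ ≤ 2)
    (hpcf : ∃ m n : ℕ, m < n ∧
      (fun z : ℂ => z ^ 2 + c)^[m] 0 = (fun z : ℂ => z ^ 2 + c)^[n] 0) :
    c = 0 ∨ c = -1 ∨ c = -2 ∨ c = Complex.I ∨ c = -Complex.I := by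
  obtain ⟨m, n, hmn, hpe⟩ := hpcf
  have hint : IsIntegral ℤ c := pcf_isIntegral c m n hmn hpe
  have hbound := pcf_orbit_bound c m n hmn hpe
  have e1 : (fun z : ℂ => z ^ 2 + c)^[1] 0 = c := by norm_num
  have e2 : (fun z : ℂ => z ^ 2 + c)^[2] 0 = c ^ 2 + c := by
    rw [show (2:ℕ) = 1 + 1 from rfl, Function.iterate_succ_apply', e1]
  have e3 : (fun z : ℂ => z ^ 2 + c)^[3] 0 = (c ^ 2 + c) ^ 2 + c := by
    rw [show (3:ℕ) = 2 + 1 from rfl, Function.iterate_succ_apply', e2]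
  have e4 : (fun z : ℂ => z ^ 2 + c)^[4] 0 = ((c ^ 2 + c) ^ 2 + c) ^ 2 + c := by
    rw [show (4:ℕ) = 3 + 1 from rfl, Function.iterate_succ_apply', e3]
  have e5 : (fun z : ℂ => z ^ 2 + c)^[5] 0 = (((c ^ 2 + c) ^ 2 + c) ^ 2 + c) ^ 2 + c := by
    rw [show (5:ℕ) = 4 + 1 from rfl, Function.iterate_succ_apply', e4]
  have b1 := hbound 1; rw [e1] at b1
  have b2 := hbound 2; rw [e2] at b2
  have b3 := hbound 3; rw [e3] at b3
  have b5 := hbound 5; rw [e5] at b5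
  -- minimal polynomial over ℤ
  have hQint : IsIntegral ℚ c := halg.isIntegral
  have hfr : Module.finrank ℚ ℚ⟮c⟯ = (minpoly ℚ c).natDegree :=
    IntermediateField.adjoin.finrank hQint
  have hmap : minpoly ℚ c = (minpoly ℤ c).map (algebraMap ℤ ℚ) :=
    minpoly.isIntegrallyClosed_eq_field_fractions' ℚ hint
  have hmono : (minpoly ℤ c).Monic := minpoly.monic hint
  have hndeq : (minpoly ℚ c).natDegree = (minpoly ℤ c).natDegree := by
    rw [hmap]; exact hmono.natDegree_map _
  have hpos : 0 < (minpoly ℤ c).natDegree := minpoly.natDegree_pos hint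
  have hle : (minpoly ℤ c).natDegree ≤ 2 := by
    rw [← hndeq, ← hfr]; exact hdeg
  have hdeg12 : (minpoly ℤ c).natDegree = 1 ∨ (minpoly ℤ c).natDegree = 2 := by omega
  rcases hdeg12 with h1 | h2
  · -- degree 1 : c is a rational integer
    have hXC := hmono.eq_X_add_C h1
    have h0 := minpoly.aeval ℤ c
    rw [hXC] at h0
    simp only [map_add, aeval_X, aeval_C, algebraMap_int_eq, eq_intCast, map_intCast] at h0
    set r : ℤ := (minpoly ℤ c).coeff 0 with hr
    clear_value r
    have hcval : c = -(r : ℂ) := by linear_combination h0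
    have hrb : |r| ≤ 2 := by
      have : norm ((r : ℤ) : ℂ) ≤ 2 := by
        rw [show ((r : ℤ) : ℂ) = -c by rw [hcval]; ring, norm_neg]
        exact b1
      rw [Complex.norm_intCast] at this
      exact_mod_cast this
    obtain ⟨hrl, hrh⟩ := abs_le.mp hrb
    interval_cases r
    · -- r = -2, c = 2
      exfalso; rw [hcval] at b2; norm_num at b2
    · -- r = -1, c = 1
      exfalso; rw [hcval] at b3; norm_num at b3
    · left; rw [hcval]; norm_num
    · right; left; rw [hcval]; norm_num
    · right; right; left; rw [hcval]; norm_num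
  · -- degree 2
    set a : ℤ := (minpoly ℤ c).coeff 0 with ha
    set b : ℤ := (minpoly ℤ c).coeff 1 with hb
    have hlead : (minpoly ℤ c).coeff 2 = 1 := by
      have := hmono.coeff_natDegree
      rwa [h2] at this
    have hc : c ^ 2 + (b : ℂ) * c + (a : ℂ) = 0 := by
      have h0 := minpoly.aeval ℤ c
      rw [aeval_eq_sum_range, h2] at h0
      simp only [Finset.sum_range_succ, Finset.sum_range_zero, zsmul_eq_mul, hlead,
        Int.cast_one, one_mul, zero_add, pow_zero, pow_one, mul_one] at h0
      linear_combination h0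
    set c' : ℂ := -(b : ℂ) - c with hc'def
    have hc' : c' ^ 2 + (b : ℂ) * c' + (a : ℂ) = 0 := by
      rw [hc'def]; linear_combination hc
    have hsum : c + c' = -(b : ℂ) := by rw [hc'def]; ring
    have hprod : c * c' = (a : ℂ) := by rw [hc'def]; linear_combination -hc
    -- c' is also PCF with the same (m, n)
    have hdvd : minpoly ℚ c ∣ (pcfP n - pcfP m).map (algebraMap ℤ ℚ) := by
      apply minpoly.dvd
      rw [aeval_map_algebraMap, map_sub, pcfP_aeval, pcfP_aeval, hpe, sub_self]
    have hroot' : aeval c' (minpoly ℚ c) = 0 := by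
      rw [hmap, aeval_map_algebraMap, aeval_eq_sum_range, h2]
      simp only [Finset.sum_range_succ, Finset.sum_range_zero, zsmul_eq_mul, hlead,
        Int.cast_one, one_mul, zero_add, pow_zero, pow_one, mul_one]
      linear_combination hc'
    have hpe' : (fun z : ℂ => z ^ 2 + c')^[m] 0 = (fun z : ℂ => z ^ 2 + c')^[n] 0 := by
      obtain ⟨q, hq⟩ := hdvd
      have h0 : aeval c' ((pcfP n - pcfP m).map (algebraMap ℤ ℚ)) = 0 := by
        rw [hq, map_mul, hroot', zero_mul]
      rw [aeval_map_algebraMap, map_sub, pcfP_aeval, pcfP_aeval, sub_eq_zero] at h0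
      exact h0.symm
    have hbound' := pcf_orbit_bound c' m n hmn hpe'
    have e1' : (fun z : ℂ => z ^ 2 + c')^[1] 0 = c' := by norm_num
    have e2' : (fun z : ℂ => z ^ 2 + c')^[2] 0 = c' ^ 2 + c' := by
      rw [show (2:ℕ) = 1 + 1 from rfl, Function.iterate_succ_apply', e1']
    have e3' : (fun z : ℂ => z ^ 2 + c')^[3] 0 = (c' ^ 2 + c') ^ 2 + c' := by
      rw [show (3:ℕ) = 2 + 1 from rfl, Function.iterate_succ_apply', e2']
    have e4' : (fun z : ℂ => z ^ 2 + c')^[4] 0 = ((c' ^ 2 + c') ^ 2 + c') ^ 2 + c' := by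
      rw [show (4:ℕ) = 3 + 1 from rfl, Function.iterate_succ_apply', e3']
    have e5' : (fun z : ℂ => z ^ 2 + c')^[5] 0 =
        (((c' ^ 2 + c') ^ 2 + c') ^ 2 + c') ^ 2 + c' := by
      rw [show (5:ℕ) = 4 + 1 from rfl, Function.iterate_succ_apply', e4']
    have b1' := hbound' 1; rw [e1'] at b1'
    have b2' := hbound' 2; rw [e2'] at b2'
    have b3' := hbound' 3; rw [e3'] at b3'
    have b5' := hbound' 5; rw [e5'] at b5'
    -- reduced forms of orbit points
    have h2r : c ^ 2 + c = (1 - (b : ℂ)) * c - (a : ℂ) := by linear_combination hc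
    have h2r' : c' ^ 2 + c' = (1 - (b : ℂ)) * c' - (a : ℂ) := by linear_combination hc'
    have h3r : (c ^ 2 + c) ^ 2 + c =
        (1 - (b : ℂ) * (1 - (b : ℂ)) ^ 2 - 2 * (a : ℂ) * (1 - (b : ℂ))) * c +
        ((a : ℂ) ^ 2 - (a : ℂ) * (1 - (b : ℂ)) ^ 2) := by
      rw [h2r]; linear_combination (1 - (b : ℂ)) ^ 2 * hc
    have h3r' : (c' ^ 2 + c') ^ 2 + c' =
        (1 - (b : ℂ) * (1 - (b : ℂ)) ^ 2 - 2 * (a : ℂ) * (1 - (b : ℂ))) * c' +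
        ((a : ℂ) ^ 2 - (a : ℂ) * (1 - (b : ℂ)) ^ 2) := by
      rw [h2r']; linear_combination (1 - (b : ℂ)) ^ 2 * hc'
    -- integer trace and norm inequalities
    have key4 : ∀ (t : ℤ) (z w : ℂ), z + w = (t : ℂ) → norm z ≤ 2 →
        norm w ≤ 2 → |t| ≤ 4 := by
      intro t z w he hz hw
      have h4 : norm ((t : ℤ) : ℂ) ≤ 4 := by
        rw [← he]
        exact le_trans (norm_add_le _ _) (by linarith)
      rw [Complex.norm_intCast] at h4
      exact_mod_cast h4
    have key4m : ∀ (t : ℤ) (z w : ℂ), z * w = (t : ℂ) → norm z ≤ 2 →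
        norm w ≤ 2 → |t| ≤ 4 := by
      intro t z w he hz hw
      have h4 : norm ((t : ℤ) : ℂ) ≤ 4 := by
        rw [← he, norm_mul]
        calc norm z * norm w ≤ 2 * 2 :=
              mul_le_mul hz hw (norm_nonneg w) (by norm_num)
          _ = 4 := by norm_num
      rw [Complex.norm_intCast] at h4
      exact_mod_cast h4
    have i2 : |(-b)| ≤ 4 := key4 (-b) c c' (by push_cast; exact hsum) b1 b1'
    have i2' : |b| ≤ 4 := by rwa [abs_neg] at i2
    have i1 : |a| ≤ 4 := key4m a c c' (by push_cast; exact hprod) b1 b1'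
    have it2 : |b ^ 2 - b - 2 * a| ≤ 4 := by
      refine key4 _ (c ^ 2 + c) (c' ^ 2 + c') ?_ b2 b2'
      rw [h2r, h2r']; push_cast
      linear_combination (1 - (b : ℂ)) * hsum
    have in2 : |a * (a - b + 1)| ≤ 4 := by
      refine key4m _ (c ^ 2 + c) (c' ^ 2 + c') ?_ b2 b2'
      rw [h2r, h2r']; push_cast
      linear_combination (1 - (b : ℂ)) ^ 2 * hprod + ((1 - (b : ℂ)) * (-(a : ℂ))) * hsum
    have it3 : |(-b) * (1 - b * (1 - b) ^ 2 - 2 * a * (1 - b)) +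
        2 * (a ^ 2 - a * (1 - b) ^ 2)| ≤ 4 := by
      refine key4 _ ((c ^ 2 + c) ^ 2 + c) ((c' ^ 2 + c') ^ 2 + c') ?_ b3 b3'
      rw [h3r, h3r']; push_cast
      linear_combination (1 - (b : ℂ) * (1 - (b : ℂ)) ^ 2 - 2 * (a : ℂ) * (1 - (b : ℂ))) * hsum
    have in3 : |a * (1 - b * (1 - b) ^ 2 - 2 * a * (1 - b)) ^ 2 -
        b * (1 - b * (1 - b) ^ 2 - 2 * a * (1 - b)) * (a ^ 2 - a * (1 - b) ^ 2) +
        (a ^ 2 - a * (1 - b) ^ 2) ^ 2| ≤ 4 := by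
      refine key4m _ ((c ^ 2 + c) ^ 2 + c) ((c' ^ 2 + c') ^ 2 + c') ?_ b3 b3'
      rw [h3r, h3r']; push_cast
      linear_combination
        (1 - (b : ℂ) * (1 - (b : ℂ)) ^ 2 - 2 * (a : ℂ) * (1 - (b : ℂ))) ^ 2 * hprod +
        ((1 - (b : ℂ) * (1 - (b : ℂ)) ^ 2 - 2 * (a : ℂ) * (1 - (b : ℂ))) *
          ((a : ℂ) ^ 2 - (a : ℂ) * (1 - (b : ℂ)) ^ 2)) * hsum
    have hcases := pcf_int_cases a b i1 i2' it2 in2 it3 in3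
    -- helper for contradictions at iterate 5
    have abs11 : ∀ T : ℝ, (4 : ℝ) < |T| →
        ∀ z w : ℂ, z + w = (T : ℂ) → norm z ≤ 2 → norm w ≤ 2 → False := by
      intro T hT z w he hz hw
      have : norm ((T : ℝ) : ℂ) ≤ 4 := by
        rw [← he]
        exact le_trans (norm_add_le _ _) (by linarith)
      rw [Complex.norm_real, Real.norm_eq_abs] at this
      linarith
    rcases hcases with ⟨ra, rb⟩ | ⟨ra, rb⟩ | ⟨ra, rb⟩ | ⟨ra, rb⟩ | ⟨ra, rb⟩ | ⟨ra, rb⟩ |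
      ⟨ra, rb⟩ | ⟨ra, rb⟩ | ⟨ra, rb⟩ <;>
      rw [ra, rb] at hc hc' <;> push_cast at hc hc'
    · -- a = -1, b = 1 : contradiction via iterate 5
      exfalso
      have hsum1 : c + c' = -1 := by
        rw [rb] at hsum; push_cast at hsum; exact hsum
      have r5 : (((c ^ 2 + c) ^ 2 + c) ^ 2 + c) ^ 2 + c = 8 + 5 * c := by
        linear_combination (8 + 12*c + 19*c^2 + 29*c^3 + 43*c^4 + 58*c^5 + 75*c^6 + 89*c^7 +
          95*c^8 + 90*c^9 + 71*c^10 + 45*c^11 + 22*c^12 + 7*c^13 + c^14) * hc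
      have r5' : (((c' ^ 2 + c') ^ 2 + c') ^ 2 + c') ^ 2 + c' = 8 + 5 * c' := by
        linear_combination (8 + 12*c' + 19*c'^2 + 29*c'^3 + 43*c'^4 + 58*c'^5 + 75*c'^6 +
          89*c'^7 + 95*c'^8 + 90*c'^9 + 71*c'^10 + 45*c'^11 + 22*c'^12 + 7*c'^13 + c'^14) * hc'
      refine abs11 11 (by norm_num) _ _ ?_ b5 b5'
      rw [r5, r5']; push_cast
      linear_combination 5 * hsum1
    · -- a = 0, b = 0 : c = 0
      left
      have h0 : c * c = 0 := by linear_combination hc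
      rcases mul_eq_zero.mp h0 with h | h <;> exact h
    · -- a = 0, b = 1 : c = 0 or c = -1
      have h0 : c * (c + 1) = 0 := by linear_combination hc
      rcases mul_eq_zero.mp h0 with h | h
      · left; exact h
      · right; left; linear_combination h
    · -- a = 0, b = 2 : c = 0 or c = -2
      have h0 : c * (c + 2) = 0 := by linear_combination hc
      rcases mul_eq_zero.mp h0 with h | h
      · left; exact h
      · right; right; left; linear_combination h
    · -- a = 1, b = 0 : c = ±i
      have h0 : (c - Complex.I) * (c + Complex.I) = 0 := by
        linear_combination hc - Complex.I_sq
      rcases mul_eq_zero.mp h0 with h | h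
      · right; right; right; left; linear_combination h
      · right; right; right; right; linear_combination h
    · -- a = 1, b = 1 : contradiction via iterate 5
      exfalso
      have hsum1 : c + c' = -1 := by
        rw [rb] at hsum; push_cast at hsum; exact hsum
      have r5 : (((c ^ 2 + c) ^ 2 + c) ^ 2 + c) ^ 2 + c = -4 - 3 * c := by
        linear_combination (4 - 3*c^2 + 5*c^3 + 3*c^4 + 6*c^5 + 17*c^6 + 21*c^7 + 31*c^8 +
          42*c^9 + 41*c^10 + 33*c^11 + 20*c^12 + 7*c^13 + c^14) * hc
      have r5' : (((c' ^ 2 + c') ^ 2 + c') ^ 2 + c') ^ 2 + c' = -4 - 3 * c' := by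
        linear_combination (4 - 3*c'^2 + 5*c'^3 + 3*c'^4 + 6*c'^5 + 17*c'^6 + 21*c'^7 +
          31*c'^8 + 42*c'^9 + 41*c'^10 + 33*c'^11 + 20*c'^12 + 7*c'^13 + c'^14) * hc'
      refine abs11 (-5) (by norm_num) _ _ ?_ b5 b5'
      rw [r5, r5']; push_cast
      linear_combination (-3) * hsum1
    · -- a = 1, b = 2 : c = -1
      right; left
      have h0 : (c + 1) * (c + 1) = 0 := by linear_combination hc
      rcases mul_eq_zero.mp h0 with h | h <;> linear_combination h
    · -- a = 2, b = 3 : c = -1 or c = -2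
      have h0 : (c + 1) * (c + 2) = 0 := by linear_combination hc
      rcases mul_eq_zero.mp h0 with h | h
      · right; left; linear_combination h
      · right; right; left; linear_combination h
    · -- a = 4, b = 4 : c = -2
      right; right; left
      have h0 : (c + 2) * (c + 2) = 0 := by linear_combination hc
      rcases mul_eq_zero.mp h0 with h | h <;> linear_combination h
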